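/- Let q be an odd prime power and let a, b ∈ F_q with b ≠ 0. The rational function (x³ + ax)/(bx² + 1) ∈ F_q(x) is a permutation rational function of P¹(F_q) if and only if −b is not a square in F_q and ab = 9. -/

import Mathlib

open Polynomial

noncomputable section

section AuxLemmas

open Finset

variable {F : Type} [Field F] [Fintype F] [DecidableEq F]

lemma prf7_four_ne_zero (hF : ringChar F ≠ 2) : (4 : F) ≠ 0 := by
  have h2 : (2 : F) ≠ 0 := Ring.two_ne_zero hF
  intro h4'
  have h44 : (4 : F) = 2 * 2 := by norm_num
  rcases mul_eq_zero.mp (h44 ▸ h4') with h | h <;> exact h2 h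

lemma prf7_chi_le_one (x : F) : quadraticChar F x ≤ 1 := by
  by_cases hx : x = 0
  · simp [hx]
  · rcases quadraticChar_dichotomy hx with h | h <;> omega

lemma prf7_sum_affine (hF : ringChar F ≠ 2) {α : F} (e : F) (hα : α ≠ 0) :
    ∑ u : F, quadraticChar F (α * u + e) = 0 := by
  have := Equiv.sum_comp ((Equiv.mulLeft₀ α hα).trans (Equiv.addRight e))
    (fun v => quadraticChar F v)
  simpa using this.trans (quadraticChar_sum_zero hF)

lemma prf7_sum_mul_chi (hF : ringChar F ≠ 2) {α e : F} (hα : α ≠ 0) (he : e ≠ 0) :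
    ∑ u : F, quadraticChar F u * quadraticChar F (α * u + e) = - quadraticChar F α := by
  classical
  have key : ∀ u : F, u ≠ 0 →
      quadraticChar F u * quadraticChar F (α * u + e) = quadraticChar F (α + e * u⁻¹) := by
    intro u hu
    rw [← map_mul]
    have h1 : u * (α * u + e) = u ^ 2 * (α + e * u⁻¹) := by field_simp
    rw [h1, map_mul, quadraticChar_sq_one' hu, one_mul]
  have h0 : ∑ u : F, quadraticChar F u * quadraticChar F (α * u + e)
      = ∑ u ∈ univ.erase (0:F), quadraticChar F (α + e * u⁻¹) := by
    have hsplit := Finset.add_sum_erase univ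
      (fun u : F => quadraticChar F u * quadraticChar F (α * u + e)) (mem_univ 0)
    rw [← hsplit]
    simp only [quadraticChar_zero, zero_mul, zero_add]
    exact Finset.sum_congr rfl fun u hu => key u (Finset.ne_of_mem_erase hu)
  have h1 : ∑ u ∈ univ.erase (0:F), quadraticChar F (α + e * u⁻¹)
      = ∑ v ∈ univ.erase α, quadraticChar F v := by
    apply Finset.sum_nbij' (i := fun u => α + e * u⁻¹) (j := fun v => e * (v - α)⁻¹)
    · intro u hu
      have hu0 : u ≠ 0 := Finset.ne_of_mem_erase hu
      simp only [mem_erase, mem_univ, and_true]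
      intro h
      have h' : e * u⁻¹ = 0 := by linear_combination h
      rcases mul_eq_zero.mp h' with h'' | h''
      · exact he h''
      · exact hu0 (inv_eq_zero.mp h'')
    · intro v hv
      have hv0 : v - α ≠ 0 := sub_ne_zero.mpr (Finset.ne_of_mem_erase hv)
      simp only [mem_erase, mem_univ, and_true]
      exact mul_ne_zero he (inv_ne_zero hv0)
    · intro u hu
      have hu0 : u ≠ 0 := Finset.ne_of_mem_erase hu
      have h2 : α + e * u⁻¹ - α = e * u⁻¹ := by ring
      rw [h2, mul_inv, inv_inv, mul_inv_cancel_left₀ he]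
    · intro v hv
      have hv0 : v - α ≠ 0 := sub_ne_zero.mpr (Finset.ne_of_mem_erase hv)
      rw [mul_inv, inv_inv, mul_inv_cancel_left₀ he]; ring
    · intro u hu; rfl
  have h2 : ∑ v ∈ univ.erase α, quadraticChar F v = - quadraticChar F α := by
    have := Finset.add_sum_erase univ (fun v : F => quadraticChar F v) (mem_univ α)
    rw [quadraticChar_sum_zero hF] at this
    linarith
  rw [h0, h1, h2]

lemma prf7_sum_fiber_sq (hF : ringChar F ≠ 2) (f : F → ℤ) :
    ∑ u : F, f (u ^ 2) = ∑ w : F, (quadraticChar F w + 1) * f w := by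
  classical
  have h1 : ∑ u : F, f (u ^ 2)
      = ∑ w : F, ∑ u ∈ univ.filter (fun u : F => u ^ 2 = w), f (u ^ 2) :=
    (Finset.sum_fiberwise_of_maps_to (fun x _ => mem_univ _) _).symm
  rw [h1]
  apply Finset.sum_congr rfl
  intro w _
  have h2 : ∑ u ∈ univ.filter (fun u : F => u ^ 2 = w), f (u ^ 2)
      = ∑ u ∈ univ.filter (fun u : F => u ^ 2 = w), f w := by
    apply Finset.sum_congr rfl
    intro u hu
    rw [(Finset.mem_filter.mp hu).2]
  rw [h2, Finset.sum_const, nsmul_eq_mul]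
  congr 1
  have := quadraticChar_card_sqrts hF w
  rw [← this]
  congr 1
  rw [← Set.toFinset_setOf]

lemma prf7_sum_chi_quadratic (hF : ringChar F ≠ 2) {α β γ : F} (hα : α ≠ 0)
    (hd : β ^ 2 - 4 * α * γ ≠ 0) :
    ∑ u : F, quadraticChar F (α * u ^ 2 + β * u + γ) = - quadraticChar F α := by
  have h2 : (2 : F) ≠ 0 := Ring.two_ne_zero hF
  have h4 : (4 : F) ≠ 0 := prf7_four_ne_zero hF
  set d : F := γ - β ^ 2 / (4 * α) with hd_def
  have hd0 : d ≠ 0 := by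
    rw [hd_def]
    intro h
    apply hd
    field_simp at h
    linear_combination -h
  have hshift : ∀ u : F, α * u ^ 2 + β * u + γ = α * (u + β / (2 * α)) ^ 2 + d := by
    intro u
    rw [hd_def]
    field_simp
    ring
  have e1 : ∑ u : F, quadraticChar F (α * u ^ 2 + β * u + γ)
      = ∑ u : F, quadraticChar F (α * (u + β / (2 * α)) ^ 2 + d) := by
    apply Finset.sum_congr rfl; intro u _; rw [hshift u]
  have e2 : ∑ u : F, quadraticChar F (α * (u + β / (2 * α)) ^ 2 + d)
      = ∑ v : F, quadraticChar F (α * v ^ 2 + d) := by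
    have := Equiv.sum_comp (Equiv.addRight (β / (2 * α)))
      (fun v : F => quadraticChar F (α * v ^ 2 + d))
    simpa using this
  have e3 : ∑ v : F, quadraticChar F (α * v ^ 2 + d) = - quadraticChar F α := by
    rw [prf7_sum_fiber_sq hF (fun w => quadraticChar F (α * w + d))]
    have expand : ∑ w : F, (quadraticChar F w + 1) * quadraticChar F (α * w + d)
        = (∑ w : F, quadraticChar F w * quadraticChar F (α * w + d))
          + ∑ w : F, quadraticChar F (α * w + d) := by
      rw [← Finset.sum_add_distrib]
      apply Finset.sum_congr rfl; intro w _; ring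
    rw [expand, prf7_sum_mul_chi hF hα hd0, prf7_sum_affine hF d hα, add_zero]
  rw [e1, e2, e3]

lemma prf7_ns_mul_ns (hF : ringChar F ≠ 2) {x y : F} (hx : ¬ IsSquare x) (hy : ¬ IsSquare y) :
    IsSquare (x * y) := by
  have hx' : quadraticChar F x = -1 := quadraticChar_neg_one_iff_not_isSquare.mpr hx
  have hy' : quadraticChar F y = -1 := quadraticChar_neg_one_iff_not_isSquare.mpr hy
  have h1 : quadraticChar F (x * y) = 1 := by rw [map_mul, hx', hy']; ring
  have h0 : x * y ≠ 0 := by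
    intro h; rw [h] at h1; simp [quadraticChar_zero] at h1
  exact (quadraticChar_one_iff_isSquare h0).mp h1

lemma prf7_sq_mul_ns (hF : ringChar F ≠ 2) {x y : F} (hx : IsSquare x) (hx0 : x ≠ 0)
    (hy : ¬ IsSquare y) : ¬ IsSquare (x * y) := by
  have hx' : quadraticChar F x = 1 := (quadraticChar_one_iff_isSquare hx0).mpr hx
  have hy' : quadraticChar F y = -1 := quadraticChar_neg_one_iff_not_isSquare.mpr hy
  apply quadraticChar_neg_one_iff_not_isSquare.mp
  rw [map_mul, hx', hy']; ring

lemma prf7_card_ns_add_one (hF : ringChar F ≠ 2) :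
    (univ.filter (fun v : F => ¬ IsSquare v)).card + 1
      = (univ.filter (fun u : F => IsSquare u)).card := by
  obtain ⟨g₀, hg₀⟩ := FiniteField.exists_nonsquare (F := F) hF
  have hg00 : g₀ ≠ 0 := fun h => hg₀ (h ▸ (IsSquare.zero : IsSquare (0:F)))
  have h0mem : (0 : F) ∈ univ.filter (fun u : F => IsSquare u) := by
    simp [IsSquare.zero]
  rw [← Finset.card_erase_add_one h0mem]
  congr 1
  apply Finset.card_bij' (i := fun v _ => g₀ * v) (j := fun u _ => g₀⁻¹ * u)
  · intro v hv
    have hv' : ¬ IsSquare v := (Finset.mem_filter.mp hv).2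
    have hv0 : v ≠ 0 := fun h => hv' (h ▸ (IsSquare.zero : IsSquare (0:F)))
    simp only [Finset.mem_erase, Finset.mem_filter, mem_univ, true_and]
    exact ⟨mul_ne_zero hg00 hv0, prf7_ns_mul_ns hF hg₀ hv'⟩
  · intro u hu
    simp only [Finset.mem_erase, Finset.mem_filter, mem_univ, true_and] at hu ⊢
    obtain ⟨hu0, hus⟩ := hu
    have : ¬ IsSquare (g₀⁻¹) := by
      intro hs
      exact hg₀ (by
        have : IsSquare (g₀⁻¹)⁻¹ := hs.inv
        rwa [inv_inv] at this)
    rw [mul_comm]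
    exact prf7_sq_mul_ns hF hus hu0 this
  · intro v hv; rw [inv_mul_cancel_left₀ hg00]
  · intro u hu; rw [mul_inv_cancel_left₀ hg00]

lemma prf7_sum_scale_zero {s : Finset F} {c : F} (hc0 : c ≠ 0) (hc1 : c ≠ 1)
    (hcl : ∀ x ∈ s, c * x ∈ s) : ∑ x ∈ s, x = 0 := by
  have hinj : ∀ x ∈ s, ∀ y ∈ s, c * x = c * y → x = y :=
    fun x _ y _ h => mul_left_cancel₀ hc0 h
  have himg : s.image (fun x => c * x) = s := by
    apply Finset.eq_of_subset_of_card_le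
    · intro y hy
      obtain ⟨x, hx, rfl⟩ := Finset.mem_image.mp hy
      exact hcl x hx
    · rw [Finset.card_image_of_injOn (fun x hx y hy h => hinj x hx y hy h)]
  have h1 : ∑ x ∈ s, c * x = ∑ x ∈ s, x := by
    conv_rhs => rw [← himg]
    rw [Finset.sum_image hinj]
  have h2 : (c - 1) * ∑ x ∈ s, x = 0 := by
    rw [sub_mul, one_mul, Finset.mul_sum, h1, sub_self]
  exact (mul_eq_zero.mp h2).resolve_left (sub_ne_zero.mpr hc1)

/-- The two consequences of injectivity on the affine part: the discriminant (in `y`) of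
`φ(x) = φ(y)` is never a nonzero square, and if it vanishes the double root is `x` itself. -/
lemma prf7_daggers (a b : F) (h2 : (2:F) ≠ 0) (h4 : (4:F) ≠ 0)
    (hg : ∀ x : F, b * x ^ 2 + 1 ≠ 0)
    (star : ∀ x y : F,
      (x ^ 3 + a * x) * (b * y ^ 2 + 1) = (y ^ 3 + a * y) * (b * x ^ 2 + 1) → x = y) :
    (∀ x s : F, s ≠ 0 →
        (x * (1 - a * b)) ^ 2 - 4 * ((b * x ^ 2 + 1) * (x ^ 2 + a)) ≠ s ^ 2) ∧
    (∀ x : F, (x * (1 - a * b)) ^ 2 - 4 * ((b * x ^ 2 + 1) * (x ^ 2 + a)) = 0 →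
        b * x ^ 4 + (3 - a * b) * x ^ 2 + a = 0) := by
  have quadroot : ∀ x y : F,
      (b * x ^ 2 + 1) * y ^ 2 + x * (1 - a * b) * y + (x ^ 2 + a) = 0 → y = x := by
    intro x y hroot
    exact (star x y (by linear_combination (x - y) * hroot)).symm
  have root_of : ∀ x y s' : F,
      (x * (1 - a * b)) ^ 2 - 4 * ((b * x ^ 2 + 1) * (x ^ 2 + a)) = s' ^ 2 →
      2 * (b * x ^ 2 + 1) * y = -(x * (1 - a * b)) + s' →
      (b * x ^ 2 + 1) * y ^ 2 + x * (1 - a * b) * y + (x ^ 2 + a) = 0 := by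
    intro x y s' hq hl
    have h4A : (4:F) * (b * x ^ 2 + 1) ≠ 0 := mul_ne_zero h4 (hg x)
    have hmain : (4 * (b * x ^ 2 + 1)) *
        ((b * x ^ 2 + 1) * y ^ 2 + x * (1 - a * b) * y + (x ^ 2 + a)) = 0 := by
      linear_combination (2 * (b * x ^ 2 + 1) * y + x * (1 - a * b) + s') * hl - hq
    exact (mul_eq_zero.mp hmain).resolve_left h4A
  constructor
  · intro x s hs heq
    have hA : b * x ^ 2 + 1 ≠ 0 := hg x
    have h2A : 2 * (b * x ^ 2 + 1) ≠ 0 := mul_ne_zero h2 hA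
    have r1 := root_of x ((-(x * (1 - a * b)) + s) / (2 * (b * x ^ 2 + 1))) s heq
      (mul_div_cancel₀ _ h2A)
    have r2 := root_of x ((-(x * (1 - a * b)) + -s) / (2 * (b * x ^ 2 + 1))) (-s)
      (by rw [neg_pow]; simpa using heq)
      (mul_div_cancel₀ _ h2A)
    have hy1 := quadroot x _ r1
    have hy2 := quadroot x _ r2
    rw [div_eq_iff h2A] at hy1 hy2
    have h2s : 2 * s = 0 := by linear_combination hy1 - hy2
    exact hs ((mul_eq_zero.mp h2s).resolve_left h2)
  · intro x heq
    have hA : b * x ^ 2 + 1 ≠ 0 := hg x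
    have h2A : 2 * (b * x ^ 2 + 1) ≠ 0 := mul_ne_zero h2 hA
    have r0 := root_of x ((-(x * (1 - a * b)) + 0) / (2 * (b * x ^ 2 + 1))) 0
      (by simpa using heq) (mul_div_cancel₀ _ h2A)
    have hy0 := quadroot x _ r0
    rw [div_eq_iff h2A] at hy0
    have hAC : (4 * (b * x ^ 2 + 1)) * ((b * x ^ 2 + 1) * x ^ 2 - (x ^ 2 + a)) = 0 := by
      linear_combination heq + (x * (1 - a * b) - 2 * (b * x ^ 2 + 1) * x) * hy0
    have hAC' : (b * x ^ 2 + 1) * x ^ 2 - (x ^ 2 + a) = 0 :=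
      (mul_eq_zero.mp hAC).resolve_left (mul_ne_zero h4 hA)
    linear_combination -hAC' - x * hy0

/-- Necessity, case `a ≠ 0`: via a quadratic character sum. -/
lemma prf7_branch_ne (hF2 : ringChar F ≠ 2)
    (a b : F) (hb : b ≠ 0) (h2 : (2:F) ≠ 0) (h4 : (4:F) ≠ 0)
    (ha : a ≠ 0) (hab1 : a * b ≠ 1) (hnsb : ¬ IsSquare (-b : F))
    (dagger1 : ∀ x s : F, s ≠ 0 →
        (x * (1 - a * b)) ^ 2 - 4 * ((b * x ^ 2 + 1) * (x ^ 2 + a)) ≠ s ^ 2)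
    (dagger2 : ∀ x : F, (x * (1 - a * b)) ^ 2 - 4 * ((b * x ^ 2 + 1) * (x ^ 2 + a)) = 0 →
        b * x ^ 4 + (3 - a * b) * x ^ 2 + a = 0) :
    a * b = 9 := by
  classical
  by_contra hw9
  have hk1 : a * b - 1 ≠ 0 := sub_ne_zero.mpr hab1
  have hk9 : a * b - 9 ≠ 0 := sub_ne_zero.mpr hw9
  set Q : F → F := fun u => (-(4*b)) * u ^ 2 + ((a*b)^2 - 6*(a*b) - 3) * u + (-(4*a)) with hQdef
  have hQch : ∀ u : F, IsSquare u → quadraticChar F (Q u) = -1 := by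
    intro u hu
    obtain ⟨r, hr⟩ := hu
    have hQΔ : Q u = (r * (1 - a * b)) ^ 2 - 4 * ((b * r ^ 2 + 1) * (r ^ 2 + a)) := by
      rw [hQdef]; simp only []; rw [hr]; ring
    have hQ0 : Q u ≠ 0 := by
      intro h0
      have hΔ0 : (r * (1 - a * b)) ^ 2 - 4 * ((b * r ^ 2 + 1) * (r ^ 2 + a)) = 0 := by
        rw [← hQΔ]; exact h0
      have hD := dagger2 r hΔ0
      have hkx : (a*b - 1) * ((a*b - 9) * r ^ 2) = 0 := by
        linear_combination hΔ0 + 4 * hD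
      have hr0 : r = 0 := by
        have := (mul_eq_zero.mp hkx).resolve_left hk1
        have := (mul_eq_zero.mp this).resolve_left hk9
        exact pow_eq_zero_iff (two_ne_zero) |>.mp this
      apply mul_ne_zero h4 ha
      have : Q u = -(4*a) := by rw [hQdef]; simp only []; rw [hr, hr0]; ring
      rw [this] at h0
      linear_combination -h0
    apply quadraticChar_neg_one_iff_not_isSquare.mpr
    rintro ⟨s, hs⟩
    have hs0 : s ≠ 0 := by
      intro h; rw [h, mul_zero] at hs; exact hQ0 hs
    exact dagger1 r s hs0 (by rw [← hQΔ, hs]; ring)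
  have hα : (-(4*b) : F) ≠ 0 := by
    intro h; exact mul_ne_zero h4 hb (by linear_combination -h)
  have hdisc : ((a*b)^2 - 6*(a*b) - 3) ^ 2 - 4 * (-(4*b)) * (-(4*a)) ≠ 0 := by
    have hfac : ((a*b)^2 - 6*(a*b) - 3) ^ 2 - 4 * (-(4*b)) * (-(4*a))
        = (a*b - 1)^3 * (a*b - 9) := by ring
    rw [hfac]
    exact mul_ne_zero (pow_ne_zero 3 hk1) hk9
  have hχα : quadraticChar F (-(4*b)) = -1 := by
    have hχb : quadraticChar F (-b) = -1 := quadraticChar_neg_one_iff_not_isSquare.mpr hnsb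
    rw [show (-(4*b) : F) = (2:F)^2 * (-b) by ring, map_mul, quadraticChar_sq_one' h2,
      one_mul, hχb]
  have hsum : ∑ u : F, quadraticChar F (Q u) = 1 := by
    have := prf7_sum_chi_quadratic hF2 hα hdisc
    rw [hχα] at this
    simpa [hQdef] using this
  have hsplit := Finset.sum_filter_add_sum_filter_not univ (fun u : F => IsSquare u)
    (fun u => quadraticChar F (Q u))
  have hSq : ∑ u ∈ univ.filter (fun u : F => IsSquare u), quadraticChar F (Q u)
      = - ((univ.filter (fun u : F => IsSquare u)).card : ℤ) := by
    rw [Finset.sum_congr rfl (fun u hu => hQch u (Finset.mem_filter.mp hu).2)]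
    rw [Finset.sum_const, nsmul_eq_mul]
    ring
  have hNS : ∑ u ∈ univ.filter (fun u : F => ¬ IsSquare u), quadraticChar F (Q u)
      ≤ ((univ.filter (fun u : F => ¬ IsSquare u)).card : ℤ) := by
    calc ∑ u ∈ univ.filter (fun u : F => ¬ IsSquare u), quadraticChar F (Q u)
        ≤ ∑ u ∈ univ.filter (fun u : F => ¬ IsSquare u), 1 :=
          Finset.sum_le_sum (fun u _ => prf7_chi_le_one (Q u))
      _ = ((univ.filter (fun u : F => ¬ IsSquare u)).card : ℤ) := by
          rw [Finset.sum_const, nsmul_eq_mul, mul_one]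
  have hcard := prf7_card_ns_add_one (F := F) hF2
  rw [hsum] at hsplit
  omega

/-- Necessity, case `a = 0`: forces characteristic `3` (so that `a * b = 0 = 9`). -/
lemma prf7_branch_zero (hF2 : ringChar F ≠ 2) (hodd : Odd (Fintype.card F))
    (a b : F) (hb : b ≠ 0) (h2 : (2:F) ≠ 0) (h4 : (4:F) ≠ 0)
    (ha0 : a = 0) (hnsb : ¬ IsSquare (-b : F))
    (dagger1 : ∀ x s : F, s ≠ 0 →
        (x * (1 - a * b)) ^ 2 - 4 * ((b * x ^ 2 + 1) * (x ^ 2 + a)) ≠ s ^ 2)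
    (dagger2 : ∀ x : F, (x * (1 - a * b)) ^ 2 - 4 * ((b * x ^ 2 + 1) * (x ^ 2 + a)) = 0 →
        b * x ^ 4 + (3 - a * b) * x ^ 2 + a = 0) :
    a * b = 9 := by
  classical
  subst ha0
  suffices h3 : (3 : F) = 0 by
    rw [zero_mul, show (9:F) = 3 * 3 by norm_num, h3, mul_zero]
  by_contra h3
  have hcast : (Fintype.card F : F) = 0 := FiniteField.cast_card_eq_zero F
  have hq3 : Fintype.card F ≠ 3 := by
    intro h
    apply h3
    have : ((3 : ℕ) : F) = 0 := by rw [← h]; exact hcast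
    exact_mod_cast this
  have hq2 : 1 < Fintype.card F := Fintype.one_lt_card
  have hq5 : 5 ≤ Fintype.card F := by
    rw [Nat.odd_iff] at hodd
    omega
  obtain ⟨c, hc0, hcsq⟩ : ∃ c : F, c ≠ 0 ∧ c ^ 2 ≠ 1 := by
    have hcard3 : ({0, 1, -1} : Finset F).card ≤ 3 := by
      apply le_trans (Finset.card_insert_le _ _)
      apply Nat.succ_le_succ
      apply le_trans (Finset.card_insert_le _ _)
      simp
    have hne : (univ \ ({0, 1, -1} : Finset F)).Nonempty := by
      rw [Finset.sdiff_nonempty]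
      intro hsub
      have := Finset.card_le_card hsub
      rw [Finset.card_univ] at this
      omega
    obtain ⟨c, hc⟩ := hne
    rw [Finset.mem_sdiff] at hc
    have hcmem := hc.2
    simp only [Finset.mem_insert, Finset.mem_singleton] at hcmem
    push_neg at hcmem
    obtain ⟨hc0, hc1, hcm1⟩ := hcmem
    refine ⟨c, hc0, ?_⟩
    intro hsq
    have : (c - 1) * (c + 1) = 0 := by linear_combination hsq
    rcases mul_eq_zero.mp this with h | h
    · exact hc1 (by linear_combination h)
    · exact hcm1 (by linear_combination h)
  have hc2ne1 : (c^2 : F) ≠ 1 := hcsq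
  have hc2ne0 : (c^2 : F) ≠ 0 := pow_ne_zero 2 hc0
  have h4b : (-(4*b) : F) ≠ 0 := by
    intro h; exact mul_ne_zero h4 hb (by linear_combination -h)
  set Sq : Finset F := univ.filter (fun u : F => IsSquare u) with hSq_def
  set NS : Finset F := univ.filter (fun u : F => ¬ IsSquare u) with hNS_def
  set Sstar : Finset F := Sq.erase 0 with hSstar_def
  have h0Sq : (0:F) ∈ Sq := by simp [hSq_def]
  have hmemSstar : ∀ u : F, u ∈ Sstar ↔ (u ≠ 0 ∧ IsSquare u) := by
    intro u; simp [hSstar_def, hSq_def, Finset.mem_erase, and_comm]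
  have hmemNS : ∀ u : F, u ∈ NS ↔ ¬ IsSquare u := by
    intro u; simp [hNS_def]
  have hLmem : ∀ u ∈ Sstar, (-(4*b)) * u - 3 ∈ NS := by
    intro u hu
    obtain ⟨hu0, r, hr⟩ := (hmemSstar u).mp hu
    have hr0 : r ≠ 0 := by
      intro h; rw [h, mul_zero] at hr; exact hu0 hr
    have hΔL : (r * (1 - 0 * b)) ^ 2 - 4 * ((b * r ^ 2 + 1) * (r ^ 2 + 0))
        = r ^ 2 * ((-(4*b)) * u - 3) := by rw [hr]; ring
    have hL0 : (-(4*b)) * u - 3 ≠ 0 := by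
      intro h0
      have hΔ0 : (r * (1 - 0 * b)) ^ 2 - 4 * ((b * r ^ 2 + 1) * (r ^ 2 + 0)) = 0 := by
        rw [hΔL, h0, mul_zero]
      have hD := dagger2 r hΔ0
      have h9 : (3 * r) ^ 2 = 0 := by
        linear_combination 4 * hD + r^2 * h0 + 4*b*r^2 * hr
      have := pow_eq_zero_iff (two_ne_zero) |>.mp h9
      rcases mul_eq_zero.mp this with h | h
      · exact h3 h
      · exact hr0 h
    rw [hmemNS]
    rintro ⟨s, hs⟩
    have hs0 : s ≠ 0 := by
      intro h; rw [h, mul_zero] at hs; exact hL0 hs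
    exact dagger1 r (r * s) (mul_ne_zero hr0 hs0) (by rw [hΔL, hs]; ring)
  have hcardSstar : Sstar.card = NS.card := by
    have h1 : Sstar.card = Sq.card - 1 := Finset.card_erase_of_mem h0Sq
    have h2 := prf7_card_ns_add_one (F := F) hF2
    rw [← hSq_def, ← hNS_def] at h2
    omega
  have hinjL : ∀ x ∈ Sstar, ∀ y ∈ Sstar, (-(4*b)) * x - 3 = (-(4*b)) * y - 3 → x = y := by
    intro x _ y _ h
    have : (-(4*b)) * x = (-(4*b)) * y := by linear_combination h
    exact mul_left_cancel₀ h4b this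
  have himg : Sstar.image (fun u => (-(4*b)) * u - 3) = NS := by
    apply Finset.eq_of_subset_of_card_le
    · intro v hv
      obtain ⟨u, hu, rfl⟩ := Finset.mem_image.mp hv
      exact hLmem u hu
    · rw [Finset.card_image_of_injOn (fun x hx y hy h => hinjL x hx y hy h), hcardSstar]
  have hsumSstar : ∑ u ∈ Sstar, u = 0 := by
    apply prf7_sum_scale_zero hc2ne0 hc2ne1
    intro x hx
    obtain ⟨hx0, hxs⟩ := (hmemSstar x).mp hx
    rw [hmemSstar]
    exact ⟨mul_ne_zero hc2ne0 hx0, (IsSquare.mul (IsSquare.sq c) hxs : IsSquare (c^2 * x))⟩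
  have hsumNS : ∑ v ∈ NS, v = 0 := by
    apply prf7_sum_scale_zero hc2ne0 hc2ne1
    intro x hx
    rw [hmemNS] at hx ⊢
    exact prf7_sq_mul_ns hF2 (IsSquare.sq c) hc2ne0 hx
  have hsumL : ∑ u ∈ Sstar, ((-(4*b)) * u - 3) = -3 * (Sstar.card : F) := by
    rw [Finset.sum_sub_distrib, ← Finset.mul_sum, hsumSstar, mul_zero, Finset.sum_const,
      nsmul_eq_mul, mul_comm]
    ring
  have himgsum : ∑ v ∈ NS, v = ∑ u ∈ Sstar, ((-(4*b)) * u - 3) := by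
    rw [← himg]
    exact Finset.sum_image hinjL
  have hn : (3 : F) * (Sstar.card : F) = 0 := by
    rw [hsumNS, hsumL] at himgsum
    linear_combination himgsum
  have hcount : 2 * Sstar.card + 1 = Fintype.card F := by
    have hfil := Finset.card_filter_add_card_filter_not
      (s := (univ : Finset F)) (p := fun u : F => IsSquare u)
    rw [Finset.card_univ] at hfil
    have h1 : Sstar.card = Sq.card - 1 := Finset.card_erase_of_mem h0Sq
    have h2' := prf7_card_ns_add_one (F := F) hF2
    rw [← hSq_def, ← hNS_def] at h2'
    rw [← hSq_def, ← hNS_def] at hfil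
    omega
  have hcastn : 2 * (Sstar.card : F) + 1 = 0 := by
    have : ((2 * Sstar.card + 1 : ℕ) : F) = 0 := by rw [hcount]; exact hcast
    push_cast at this
    exact this
  exact h3 (by linear_combination (-2 : F) * hn + 3 * hcastn)

end AuxLemmas

open scoped Classical in
/-- The self-map of `ℙ¹(F) = F ∪ {∞}` (encoded as `Option F`, with `none` = `∞`)
induced by the rational function `f/g`, where `f, g` are coprime polynomials. -/
def ratEval {F : Type} [Field F] (f g : F[X]) : Option F → Option F := fun x =>
  match x with
  | some a => if g.eval a ≠ 0 then some (f.eval a / g.eval a) else none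
  | none =>
      if g.natDegree < f.natDegree then none
      else if f.natDegree < g.natDegree then some 0
      else some (f.leadingCoeff / g.leadingCoeff)

theorem stmt_7 (F : Type) [Field F] [Fintype F] (hodd : Odd (Fintype.card F))
    (a b : F) (hb : b ≠ 0)
    (hco : IsCoprime (X ^ 3 + C a * X : F[X]) (C b * X ^ 2 + 1)) :
    Function.Bijective (ratEval (X ^ 3 + C a * X : F[X]) (C b * X ^ 2 + 1)) ↔
      (¬ ∃ v : F, v ^ 2 = -b) ∧ a * b = 9 := by
  classical
  have hF2 : ringChar F ≠ 2 := by
    intro h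
    have := FiniteField.even_card_of_char_two h
    rw [Nat.odd_iff] at hodd
    omega
  have h2 : (2 : F) ≠ 0 := Ring.two_ne_zero hF2
  have h4 : (4 : F) ≠ 0 := prf7_four_ne_zero hF2
  -- basic facts about the induced map
  have hgdeg : (C b * X ^ 2 + 1 : F[X]).natDegree = 2 := by
    rw [show (1 : F[X]) = C 1 by rw [map_one], natDegree_add_C, natDegree_C_mul_X_pow _ _ hb]
  have hfdeg : (X ^ 3 + C a * X : F[X]).natDegree = 3 := by
    rw [natDegree_add_eq_left_of_natDegree_lt, natDegree_X_pow]
    calc (C a * X : F[X]).natDegree ≤ 1 := by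
          simpa using natDegree_C_mul_le a X
      _ < (X ^ 3 : F[X]).natDegree := by rw [natDegree_X_pow]; norm_num
  have hnone : ratEval (X ^ 3 + C a * X : F[X]) (C b * X ^ 2 + 1) none = none := by
    unfold ratEval
    rw [hfdeg, hgdeg]
    norm_num
  have hevalg : ∀ x : F, (C b * X ^ 2 + 1 : F[X]).eval x = b * x ^ 2 + 1 := by
    intro x; simp
  have hevalf : ∀ x : F, (X ^ 3 + C a * X : F[X]).eval x = x ^ 3 + a * x := by
    intro x; simp
  have hsome : ∀ x : F, b * x ^ 2 + 1 ≠ 0 →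
      ratEval (X ^ 3 + C a * X : F[X]) (C b * X ^ 2 + 1) (some x)
        = some ((x ^ 3 + a * x) / (b * x ^ 2 + 1)) := by
    intro x hx
    have hr : ratEval (X ^ 3 + C a * X : F[X]) (C b * X ^ 2 + 1) (some x)
        = if (C b * X ^ 2 + 1 : F[X]).eval x ≠ 0
          then some ((X ^ 3 + C a * X : F[X]).eval x / (C b * X ^ 2 + 1 : F[X]).eval x)
          else none := rfl
    rw [hr, hevalg, hevalf, if_pos hx]
  have hzero : ∀ x : F, b * x ^ 2 + 1 = 0 →
      ratEval (X ^ 3 + C a * X : F[X]) (C b * X ^ 2 + 1) (some x) = none := by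
    intro x hx
    have hr : ratEval (X ^ 3 + C a * X : F[X]) (C b * X ^ 2 + 1) (some x)
        = if (C b * X ^ 2 + 1 : F[X]).eval x ≠ 0
          then some ((X ^ 3 + C a * X : F[X]).eval x / (C b * X ^ 2 + 1 : F[X]).eval x)
          else none := rfl
    rw [hr, hevalg]
    simp [hx]
  -- coprimality rules out a*b = 1
  have hab1 : a * b ≠ 1 := by
    intro h1
    have hfact : (X ^ 3 + C a * X : F[X]) = (X ^ 2 + C a) * X := by ring
    have hgfact : (C b * X ^ 2 + 1 : F[X]) = C b * (X ^ 2 + C a) := by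
      rw [mul_add, ← C_mul, show b * a = 1 by rw [mul_comm]; exact h1, map_one]
    rw [hfact, hgfact] at hco
    obtain ⟨u, v, huv⟩ := hco
    have : IsUnit (X ^ 2 + C a : F[X]) := by
      apply isUnit_of_dvd_one
      refine ⟨u * X + v * C b, ?_⟩
      rw [← huv]; ring
    have := natDegree_eq_zero_of_isUnit this
    rw [natDegree_X_pow_add_C] at this
    norm_num at this
  constructor
  · -- necessity
    intro hbij
    have hinj := hbij.1
    have hg : ∀ x : F, b * x ^ 2 + 1 ≠ 0 := by
      intro x hx
      have heq : ratEval (X ^ 3 + C a * X : F[X]) (C b * X ^ 2 + 1) (some x)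
          = ratEval (X ^ 3 + C a * X : F[X]) (C b * X ^ 2 + 1) none := by
        rw [hzero x hx, hnone]
      exact absurd (hinj heq) (by simp)
    have hns : ¬ ∃ v : F, v ^ 2 = -b := by
      rintro ⟨v, hv⟩
      apply hg (v / b)
      rw [div_pow, hv]
      field_simp
      ring
    refine ⟨hns, ?_⟩
    have hnsb : ¬ IsSquare (-b : F) := by
      rintro ⟨v, hv⟩
      exact hns ⟨v, by rw [hv]; ring⟩
    have star : ∀ x y : F,
        (x ^ 3 + a * x) * (b * y ^ 2 + 1) = (y ^ 3 + a * y) * (b * x ^ 2 + 1) → x = y := by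
      intro x y hcross
      have h1 : ratEval (X ^ 3 + C a * X : F[X]) (C b * X ^ 2 + 1) (some x)
          = ratEval (X ^ 3 + C a * X : F[X]) (C b * X ^ 2 + 1) (some y) := by
        rw [hsome x (hg x), hsome y (hg y)]
        congr 1
        rw [div_eq_div_iff (hg x) (hg y)]
        exact hcross
      simpa using hinj h1
    obtain ⟨dagger1, dagger2⟩ := prf7_daggers a b h2 h4 hg star
    by_cases ha0 : a = 0
    · exact prf7_branch_zero hF2 hodd a b hb h2 h4 ha0 hnsb dagger1 dagger2
    · exact prf7_branch_ne hF2 a b hb h2 h4 ha0 hab1 hnsb dagger1 dagger2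
  · -- sufficiency
    rintro ⟨hns, hab⟩
    have hg : ∀ x : F, b * x ^ 2 + 1 ≠ 0 := by
      intro x hx
      exact hns ⟨b * x, by ring_nf; linear_combination b * hx⟩
    rw [← Finite.injective_iff_bijective]
    intro p q hpq
    match p, q with
    | none, none => rfl
    | none, some y =>
        rw [hnone, hsome y (hg y)] at hpq; exact absurd hpq (by simp)
    | some x, none =>
        rw [hnone, hsome x (hg x)] at hpq; exact absurd hpq (by simp)
    | some x, some y =>
        rw [hsome x (hg x), hsome y (hg y)] at hpq
        have hdiv : (x ^ 3 + a * x) / (b * x ^ 2 + 1) = (y ^ 3 + a * y) / (b * y ^ 2 + 1) :=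
          Option.some_injective F hpq
        have hcross : (x ^ 3 + a * x) * (b * y ^ 2 + 1) = (y ^ 3 + a * y) * (b * x ^ 2 + 1) :=
          (div_eq_div_iff (hg x) (hg y)).mp hdiv
        congr 1
        by_contra hxy
        have hh : (b * x ^ 2 + 1) * y ^ 2 + x * (1 - a * b) * y + (x ^ 2 + a) = 0 := by
          have hfac : (x - y) * ((b * x ^ 2 + 1) * y ^ 2 + x * (1 - a * b) * y + (x ^ 2 + a))
              = (x ^ 3 + a * x) * (b * y ^ 2 + 1) - (y ^ 3 + a * y) * (b * x ^ 2 + 1) := by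
            ring
          have := sub_eq_zero.mpr hcross
          rw [← hfac] at this
          exact (mul_eq_zero.mp this).resolve_left (sub_ne_zero.mpr hxy)
        have key : b * (x - y) ^ 2 = -(b * (x * y) - 3) ^ 2 := by
          linear_combination b * hh + (b * x * y - 1) * hab
        by_cases h3 : b * (x * y) - 3 = 0
        · rw [h3] at key
          have hb2 : b * (x - y) ^ 2 = 0 := by rw [key]; ring
          have : (x - y) ^ 2 = 0 := (mul_eq_zero.mp hb2).resolve_left hb
          exact hxy (sub_eq_zero.mp (pow_eq_zero_iff (by norm_num) |>.mp this))
        · apply hns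
          refine ⟨b * (x - y) / (b * (x * y) - 3), ?_⟩
          rw [div_pow]
          rw [div_eq_iff (pow_ne_zero 2 h3)]
          linear_combination b * key

end
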